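/- For a symmetric (p,q) random walk (P[S₁=±1]=p, P[S₁=0]=q=1-2p), the sum over j ≥ 1 of K(j) := P[S₁ > 0, ..., S_{j-1} > 0, S_j = 0] equals (1+q)/2. -/

import Mathlib

open MeasureTheory ProbabilityTheory Filter
open scoped ENNReal

/-- Chebyshev-type bound: a centered integrable function bounded below by `-1`
satisfies `μ {M ≤ f} ≤ 1/M`. -/
lemma cheb_aux {Ω : Type*} [MeasurableSpace Ω] (μ : Measure Ω) [IsProbabilityMeasure μ]
    (f : Ω → ℝ) (hfm : Measurable f) (hfi : Integrable f μ)
    (h0 : ∫ ω, f ω ∂μ = 0) (hb : ∀ᵐ ω ∂μ, -1 ≤ f ω) (M : ℝ) (hM : 0 < M) :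
    μ {ω | M ≤ f ω} ≤ ENNReal.ofReal (1/M) := by
  set A : Set Ω := {ω | M ≤ f ω} with hA
  have hAm : MeasurableSet A := hfm measurableSet_Ici
  have hsplit : ∫ ω in A, f ω ∂μ + ∫ ω in Aᶜ, f ω ∂μ = 0 := by
    rw [integral_add_compl hAm hfi]; exact h0
  have hcompl : (-1 : ℝ) ≤ ∫ ω in Aᶜ, f ω ∂μ := by
    have h1 : ∫ ω in Aᶜ, (-1 : ℝ) ∂μ ≤ ∫ ω in Aᶜ, f ω ∂μ := by
      refine setIntegral_mono_ae_restrict (integrable_const _).integrableOn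
        hfi.integrableOn ?_
      exact ae_restrict_of_ae (hb.mono fun ω hω => hω)
    have h2 : ∫ ω in Aᶜ, (-1 : ℝ) ∂μ = -(μ Aᶜ).toReal := by
      rw [setIntegral_const]; simp [measureReal_def]
    have h3 : (μ Aᶜ).toReal ≤ 1 := by
      have := prob_le_one (μ := μ) (s := Aᶜ)
      calc (μ Aᶜ).toReal ≤ (1 : ℝ≥0∞).toReal := ENNReal.toReal_mono ENNReal.one_ne_top this
        _ = 1 := by simp
    nlinarith [h1, h2.symm.trans_le h1]
  have hAint : M * (μ A).toReal ≤ ∫ ω in A, f ω ∂μ :=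
    setIntegral_ge_of_const_le_real hAm (measure_ne_top μ A) (fun ω hω => hω) hfi.integrableOn
  have htR : M * (μ A).toReal ≤ 1 := by nlinarith
  have h4 : (μ A).toReal ≤ 1 / M := by
    rw [le_div_iff₀ hM]; linarith [htR]
  calc μ A = ENNReal.ofReal (μ A).toReal := (ENNReal.ofReal_toReal (measure_ne_top μ A)).symm
    _ ≤ ENNReal.ofReal (1/M) := ENNReal.ofReal_le_ofReal h4

lemma never_return_null {Ω : Type*} [MeasureSpace Ω] (μ : Measure Ω) [IsProbabilityMeasure μ]
    (p q : ℝ) (hp0 : 0 < p) (hp2 : p < 1/2) (hq : q = 1 - 2*p)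
    (X : ℕ → Ω → ℤ)
    (hmeas : ∀ i, Measurable (X i))
    (hindep : iIndepFun X μ)
    (hdist1 : ∀ i, μ (X i ⁻¹' {1}) = ENNReal.ofReal p)
    (hdistm1 : ∀ i, μ (X i ⁻¹' {-1}) = ENNReal.ofReal p)
    (S : ℕ → Ω → ℤ)
    (hS : ∀ n ω, S n ω = ∑ i ∈ Finset.range n, X i ω)
    (G : Set Ω) (hGdef : G = {ω | ∀ n, X n ω = 1 ∨ X n ω = -1 ∨ X n ω = 0})
    (hGc : μ Gᶜ = 0) :
    μ {ω | ∀ n, 1 ≤ n → 1 ≤ S n ω} = 0 := by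
  classical
  have hSeq : ∀ n, S n = fun ω => ∑ i ∈ Finset.range n, X i ω := fun n => funext (hS n)
  have hSmeas : ∀ n, Measurable (S n) := by
    intro n; rw [hSeq n]; exact Finset.measurable_sum _ fun i _ => hmeas i
  have hGae : ∀ᵐ ω ∂μ, ω ∈ G := by rw [ae_iff]; exact hGc
  have hGmem : ∀ ω, ω ∈ G → ∀ n, X n ω = 1 ∨ X n ω = -1 ∨ X n ω = 0 := by
    intro ω hω; rw [hGdef] at hω; exact hω
  have hcast : Measurable (Int.cast : ℤ → ℝ) := measurable_from_top
  -- the filtration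
  let F : Filtration ℕ (inferInstance : MeasurableSpace Ω) :=
    ⟨fun n => ⨆ i ∈ Set.Iio n, MeasurableSpace.comap (X i) inferInstance,
     fun n m hnm => biSup_mono fun i (hi : i ∈ Set.Iio n) => lt_of_lt_of_le hi hnm,
     fun n => iSup₂_le fun i _ => (hmeas i).comap_le⟩
  have hFseq : ∀ n, (F n : MeasurableSpace Ω)
      = ⨆ i ∈ Set.Iio n, MeasurableSpace.comap (X i) inferInstance := fun n => rfl
  have hXFmeas : ∀ n i, i < n → Measurable[F n] (X i) := by
    intro n i hi
    rw [measurable_iff_comap_le, hFseq]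
    exact le_biSup (fun i => MeasurableSpace.comap (X i) inferInstance) (Set.mem_Iio.2 hi)
  have hSFmeas : ∀ n j, j ≤ n → Measurable[F n] (S j) := by
    intro n j hj
    rw [hSeq]
    exact Finset.measurable_sum _ fun i hi =>
      hXFmeas n i (lt_of_lt_of_le (Finset.mem_range.1 hi) hj)
  have hAdaptS : Adapted F S := fun n => hSFmeas n n le_rfl
  -- the real-valued walk
  set Sr : ℕ → Ω → ℝ := fun n ω => ((S n ω : ℤ) : ℝ) with hSrdef
  have hadapt : Adapted F Sr := fun n => hcast.comp (hSFmeas n n le_rfl)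
  have hSbound : ∀ ω ∈ G, ∀ n, |S n ω| ≤ (n:ℤ) := by
    intro ω hω n
    rw [hS]
    calc |∑ i ∈ Finset.range n, X i ω| ≤ ∑ i ∈ Finset.range n, |X i ω| :=
          Finset.abs_sum_le_sum_abs _ _
      _ ≤ ∑ _i ∈ Finset.range n, 1 :=
          Finset.sum_le_sum fun i _ => by rcases hGmem ω hω i with h | h | h <;> simp [h]
      _ = n := by simp
  have hint : ∀ n, Integrable (Sr n) μ := by
    intro n
    refine ⟨(hcast.comp (hSmeas n)).aestronglyMeasurable,
      HasFiniteIntegral.of_bounded (C := (n:ℝ)) ?_⟩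
    filter_upwards [hGae] with ω hω
    have h := hSbound ω hω n
    rw [Real.norm_eq_abs]
    rw [show |((S n ω : ℤ):ℝ)| = ((|S n ω| : ℤ) : ℝ) by push_cast; ring]
    exact_mod_cast h
  have hXr_int : ∀ n, Integrable (fun ω => ((X n ω : ℤ):ℝ)) μ := by
    intro n
    refine ⟨(hcast.comp (hmeas n)).aestronglyMeasurable,
      HasFiniteIntegral.of_bounded (C := (1:ℝ)) ?_⟩
    filter_upwards [hGae] with ω hω
    rcases hGmem ω hω n with h | h | h <;> simp [h]
  have hXr_integral : ∀ n, ∫ ω, ((X n ω : ℤ):ℝ) ∂μ = 0 := by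
    intro n
    have hae : (fun ω => ((X n ω : ℤ):ℝ)) =ᵐ[μ]
        fun ω => Set.indicator (X n ⁻¹' {1}) (fun _ => (1:ℝ)) ω
          - Set.indicator (X n ⁻¹' {-1}) (fun _ => (1:ℝ)) ω := by
      filter_upwards [hGae] with ω hω
      rcases hGmem ω hω n with h | h | h <;>
        simp [Set.indicator_apply, Set.mem_preimage, h]
    rw [integral_congr_ae hae, integral_sub
        ((integrable_const (1:ℝ)).indicator ((hmeas n) (measurableSet_singleton _)))
        ((integrable_const (1:ℝ)).indicator ((hmeas n) (measurableSet_singleton _))),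
      integral_indicator_const _ ((hmeas n) (measurableSet_singleton _)),
      integral_indicator_const _ ((hmeas n) (measurableSet_singleton _)),
      measureReal_def, measureReal_def, hdist1, hdistm1]
    ring
  -- S is a martingale
  have hmart : Martingale Sr F μ := by
    refine martingale_nat hadapt.stronglyAdapted hint fun n => ?_
    have hsum : Sr (n+1) = Sr n + fun ω => ((X n ω : ℤ):ℝ) := by
      funext ω
      simp only [hSrdef, Pi.add_apply, hS, Finset.sum_range_succ]
      push_cast; ring
    have hind : Indep (MeasurableSpace.comap (X n) inferInstance) (F n) μ := by
      have hd : Disjoint ({n} : Set ℕ) (Set.Iio n) := by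
        simp [Set.disjoint_left]
      have h := indep_iSup_of_disjoint (m := fun i => MeasurableSpace.comap (X i) inferInstance)
        (fun i => (hmeas i).comap_le) hindep hd
      rwa [iSup_singleton] at h
    have hcond : μ[(fun ω => ((X n ω : ℤ):ℝ))|F n] =ᵐ[μ] fun _ => ∫ ω, ((X n ω:ℤ):ℝ) ∂μ :=
      condExp_indep_eq (hmeas n).comap_le (F.le n)
        ((hcast.comp (measurable_iff_comap_le.2 le_rfl)).stronglyMeasurable) hind
    have h1 : μ[Sr (n+1)|F n] =ᵐ[μ] μ[Sr n|F n] + μ[(fun ω => ((X n ω:ℤ):ℝ))|F n] := by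
      rw [hsum]; exact condExp_add (hint n) (hXr_int n) _
    have h2 : μ[Sr n|F n] = Sr n :=
      condExp_of_stronglyMeasurable (F.le n) (hadapt n).stronglyMeasurable (hint n)
    refine Filter.EventuallyEq.symm ?_
    calc μ[Sr (n+1)|F n]
        =ᵐ[μ] μ[Sr n|F n] + μ[(fun ω => ((X n ω:ℤ):ℝ))|F n] := h1
      _ =ᵐ[μ] Sr n + fun _ => (0:ℝ) := by
          rw [h2]
          exact Filter.EventuallyEq.add Filter.EventuallyEq.rfl
            (hcond.trans (by rw [hXr_integral n]))
      _ = Sr n := by funext ω; simp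
  -- the never-return set
  set Npos : Set Ω := {ω | ∀ n, 1 ≤ n → 1 ≤ S n ω} with hNposdef
  have key : ∀ M : ℕ, 1 ≤ M → μ Npos ≤ ENNReal.ofReal (1/(M:ℝ)) := by
    intro M hM
    set sM : Set ℤ := {x | x ≤ 0 ∨ (M:ℤ) ≤ x} with hsMdef
    have hsMm : MeasurableSet sM := by measurability
    set D : ℕ → Set Ω := fun n => {ω | ∀ j, 1 ≤ j → j ≤ n → S j ω ∉ sM} with hDdef
    have hDmeasF : ∀ n, MeasurableSet[F n] (D n) := by
      intro n
      have h1 : D n = ⋂ j ∈ Set.Icc 1 n, (S j) ⁻¹' sMᶜ := by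
        ext ω; simp [hDdef, Set.mem_Icc]
      rw [h1]
      exact MeasurableSet.biInter (Set.to_countable _)
        fun j hj => (hSFmeas n j hj.2) hsMm.compl
    have hDmeas : ∀ n, MeasurableSet (D n) := fun n => F.le n _ (hDmeasF n)
    -- main horizon bound
    have main : ∀ N : ℕ, 1 ≤ N → μ Npos ≤ ENNReal.ofReal (1/(M:ℝ)) + μ (D N) := by
      intro N hN
      set τ : Ω → ℕ := hittingBtwn S sM 1 N with hτdef
      set τ' : Ω → ℕ∞ := fun ω => (τ ω : ℕ∞) with hτ'def
      have hτ : IsStoppingTime F τ' := hAdaptS.isStoppingTime_hittingBtwn hsMm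
      have hτle : ∀ ω, τ ω ≤ N := fun ω => hittingBtwn_le ω
      have hτle' : ∀ ω, τ' ω ≤ N := fun ω => by
        show ((τ ω : ℕ) : ℕ∞) ≤ ((N : ℕ) : ℕ∞); exact_mod_cast hτle ω
      have hτge : ∀ ω, 1 ≤ τ ω := fun ω => le_hittingBtwn hN ω
      have hsv_int : Integrable (stoppedValue Sr τ') μ :=
        hmart.submartingale.integrable_stoppedValue hτ hτle'
      -- expectation of stopped value is 0
      have hSr00 : stoppedValue Sr (fun _ => ((0:ℕ):ℕ∞)) = fun _ => (0:ℝ) := by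
        funext ω; show Sr 0 ω = 0; simp [hSrdef, hS]
      have hsv0 : ∫ ω, stoppedValue Sr τ' ω ∂μ = 0 := by
        have hc : IsStoppingTime F (fun _ => ((0:ℕ):ℕ∞)) := isStoppingTime_const F 0
        have hle : (fun _ => ((0:ℕ):ℕ∞)) ≤ τ' := fun ω => by simp
        have e1 := hmart.submartingale.expected_stoppedValue_mono hc hτ hle hτle'
        have e2 := hmart.neg.submartingale.expected_stoppedValue_mono hc hτ hle hτle'
        rw [hSr00] at e1
        simp only [integral_zero] at e1
        have hneg0 : stoppedValue (-Sr) (fun _ => ((0:ℕ):ℕ∞)) = fun _ => (0:ℝ) := by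
          funext ω
          show (-Sr) 0 ω = 0
          simp [hSrdef, hS]
        have hnegτ : stoppedValue (-Sr) τ' = -(stoppedValue Sr τ') := rfl
        rw [hneg0, hnegτ] at e2
        simp only [integral_zero, Pi.neg_apply] at e2
        rw [integral_neg] at e2
        have : ∫ ω, stoppedValue Sr τ' ω ∂μ ≤ 0 := by linarith
        linarith
      -- pointwise facts
      have hfact : ∀ ω ∈ G, (-1:ℤ) ≤ S (τ ω) ω ∧
          (ω ∈ Npos → ((M:ℤ) ≤ S (τ ω) ω ∨ ω ∈ D N)) := by
        intro ω hω
        constructor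
        · obtain ⟨m, hm⟩ : ∃ m, τ ω = m + 1 := ⟨τ ω - 1, by have := hτge ω; omega⟩
          have hstep : S (m+1) ω = S m ω + X m ω := by
            rw [hS, hS, Finset.sum_range_succ]
          have hXm : X m ω = 1 ∨ X m ω = -1 ∨ X m ω = 0 := hGmem ω hω m
          rcases Nat.eq_zero_or_pos m with rfl | hm1
          · have hS0 : S 0 ω = 0 := by rw [hS]; simp
            rw [hm, hstep]; omega
          · have hnot : S m ω ∉ sM :=
              notMem_of_lt_hittingBtwn (n := 1) (m := N) (show m < τ ω by omega) hm1
            simp only [hsMdef, Set.mem_setOf_eq, not_or, not_le] at hnot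
            rw [hm, hstep]; omega
        · intro hωN
          by_cases hex : ∃ j ∈ Set.Icc 1 N, S j ω ∈ sM
          · left
            have hmem : S (τ ω) ω ∈ sM := stoppedValue_hittingBtwn_mem hex
            have h1 : 1 ≤ S (τ ω) ω := hωN (τ ω) (hτge ω)
            rcases hmem with h | h
            · omega
            · exact h
          · right
            intro j hj1 hj2 hmem
            exact hex ⟨j, ⟨hj1, hj2⟩, hmem⟩
      -- measurability of the stopped value
      have hsvmeas : Measurable (stoppedValue Sr τ') := by
        have h1 : Measurable fun pr : Ω × WithTop ℕ => Sr pr.2.untopA pr.1 :=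
          measurable_from_prod_countable_left fun n => hcast.comp (hSmeas n.untopA)
        have hτmeas : @Measurable Ω (WithTop ℕ) _ WithTop.instMeasurableSpace τ' := (hτ.measurable_of_le hτle').mono (F.le N) le_rfl
        exact h1.comp (measurable_id.prodMk hτmeas)
      have hMpos : (0:ℝ) < (M:ℝ) := by exact_mod_cast hM
      have hcheb := cheb_aux μ (stoppedValue Sr τ') hsvmeas hsv_int hsv0
        (by filter_upwards [hGae] with ω hω
            have := (hfact ω hω).1
            show (-1:ℝ) ≤ ((S (τ ω) ω : ℤ):ℝ)
            exact_mod_cast this)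
        (M:ℝ) hMpos
      have hincl : Npos ⊆ {ω | (M:ℝ) ≤ stoppedValue Sr τ' ω} ∪ (D N ∪ Gᶜ) := by
        intro ω hω
        by_cases hωG : ω ∈ G
        · rcases (hfact ω hωG).2 hω with h | h
          · left
            show (M:ℝ) ≤ ((S (τ ω) ω : ℤ):ℝ)
            exact_mod_cast h
          · exact Or.inr (Or.inl h)
        · exact Or.inr (Or.inr hωG)
      calc μ Npos ≤ μ ({ω | (M:ℝ) ≤ stoppedValue Sr τ' ω} ∪ (D N ∪ Gᶜ)) := measure_mono hincl
        _ ≤ μ {ω | (M:ℝ) ≤ stoppedValue Sr τ' ω} + μ (D N ∪ Gᶜ) := measure_union_le _ _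
        _ ≤ μ {ω | (M:ℝ) ≤ stoppedValue Sr τ' ω} + (μ (D N) + μ Gᶜ) :=
            add_le_add_right (measure_union_le _ _) _
        _ = μ {ω | (M:ℝ) ≤ stoppedValue Sr τ' ω} + μ (D N) := by rw [hGc, add_zero]
        _ ≤ ENNReal.ofReal (1/(M:ℝ)) + μ (D N) := add_le_add_left hcheb _
    -- block bound on D
    set c : ℝ≥0∞ := (ENNReal.ofReal p)^M with hcdef
    have hc0 : c ≠ 0 := pow_ne_zero _ (by simp [ENNReal.ofReal_eq_zero, not_le, hp0])
    have hblock : ∀ K : ℕ, μ (D ((K+1)*M)) ≤ (1 - c)^K := by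
      intro K
      induction K with
      | zero => simpa using prob_le_one
      | succ K ih =>
        set a : ℕ := (K+1)*M with hadef
        have ha1 : 1 ≤ a := le_trans hM (Nat.le_mul_of_pos_left M (Nat.succ_pos K))
        set Fb : Set Ω := ⋂ i ∈ Finset.Ico a (a+M), X i ⁻¹' {1} with hFbdef
        have hFbm : MeasurableSet Fb :=
          Finset.measurableSet_biInter _ fun i _ => (hmeas i) (measurableSet_singleton _)
        have hmuFb : μ Fb = c := by
          rw [hFbdef]
          rw [ProbabilityTheory.iIndep.meas_biInter
              (m := fun i => MeasurableSpace.comap (X i) inferInstance) hindep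
              (fun i _ => ⟨{1}, measurableSet_singleton _, rfl⟩)]
          rw [Finset.prod_congr rfl fun i _ => hdist1 i, Finset.prod_const, Nat.card_Ico]
          simp [hcdef]
        have hsub : D ((K+1+1)*M) ⊆ D a ∩ Fbᶜ := by
          intro ω hω
          have hle' : a ≤ (K+1+1)*M := by
            rw [hadef]; exact Nat.mul_le_mul (by omega) le_rfl
          have haM : a + M = (K+1+1)*M := by rw [hadef]; ring
          constructor
          · intro j h1 h2
            exact hω j h1 (le_trans h2 hle')
          · intro hmem
            simp only [hFbdef, Set.mem_iInter, Set.mem_preimage, Set.mem_singleton_iff,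
              Finset.mem_Ico] at hmem
            have hSa : S a ω ∉ sM := hω a ha1 hle'
            simp only [hsMdef, Set.mem_setOf_eq, not_or, not_le] at hSa
            have hsum : S (a+M) ω = S a ω + ∑ i ∈ Finset.Ico a (a+M), X i ω := by
              rw [hS, hS, Finset.range_eq_Ico,
                ← Finset.sum_Ico_consecutive _ (Nat.zero_le a) (Nat.le_add_right a M), Finset.range_eq_Ico]
            have hsum1 : ∑ i ∈ Finset.Ico a (a+M), X i ω = (M:ℤ) := by
              rw [Finset.sum_congr rfl fun i hi =>
                hmem i ⟨(Finset.mem_Ico.1 hi).1, (Finset.mem_Ico.1 hi).2⟩]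
              rw [Finset.sum_const, Nat.card_Ico]
              simp
            have hbig : S (a+M) ω ∉ sM := hω (a+M) (by omega) (le_of_eq haM)
            simp only [hsMdef, Set.mem_setOf_eq, not_or, not_le] at hbig
            omega
        have hd : Disjoint (Set.Iio a) (Set.Ico a (a+M)) := by
          rw [Set.disjoint_left]
          rintro x hx ⟨h1, _⟩
          exact absurd h1 (not_le.2 hx)
        have hI := indep_iSup_of_disjoint
          (m := fun i => MeasurableSpace.comap (X i) inferInstance)
          (fun i => (hmeas i).comap_le) hindep hd
        have hDa : MeasurableSet[⨆ i ∈ Set.Iio a, MeasurableSpace.comap (X i) inferInstance]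
            (D a) := hDmeasF a
        have hFbhigh : MeasurableSet[⨆ i ∈ Set.Ico a (a+M),
            MeasurableSpace.comap (X i) inferInstance] Fb := by
          rw [hFbdef]
          refine MeasurableSet.biInter (Set.to_countable _) fun i hi => ?_
          have hi' : i ∈ Set.Ico a (a+M) := by
            simpa [Set.mem_Ico] using Finset.mem_Ico.1 (by exact_mod_cast hi)
          exact le_biSup (fun i => MeasurableSpace.comap (X i) inferInstance) hi' _
            ⟨{1}, measurableSet_singleton _, rfl⟩
        have hprod : μ (D a ∩ Fbᶜ) = μ (D a) * μ Fbᶜ :=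
          (ProbabilityTheory.Indep_iff _ _ μ).1 hI _ _ hDa hFbhigh.compl
        have hcFb : μ Fbᶜ = 1 - c := by
          rw [measure_compl hFbm (measure_ne_top μ _), hmuFb]
          simp
        calc μ (D ((K+1+1)*M)) ≤ μ (D a ∩ Fbᶜ) := measure_mono hsub
          _ = μ (D a) * μ Fbᶜ := hprod
          _ ≤ (1-c)^K * (1-c) := by rw [hcFb]; exact mul_le_mul' ih le_rfl
          _ = (1-c)^(K+1) := (pow_succ _ _).symm
    -- put things together
    have h1c : 1 - c < 1 := ENNReal.sub_lt_self ENNReal.one_ne_top one_ne_zero hc0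
    have hlim : Tendsto (fun K : ℕ => ENNReal.ofReal (1/(M:ℝ)) + (1-c)^K) atTop
        (nhds (ENNReal.ofReal (1/(M:ℝ)) + 0)) :=
      Tendsto.const_add _ (ENNReal.tendsto_pow_atTop_nhds_zero_of_lt_one h1c)
    have hbound : ∀ K : ℕ, μ Npos ≤ ENNReal.ofReal (1/(M:ℝ)) + (1-c)^K := by
      intro K
      have hN1 : 1 ≤ (K+1)*M := le_trans hM (Nat.le_mul_of_pos_left M (Nat.succ_pos K))
      exact (main ((K+1)*M) hN1).trans (add_le_add_right (hblock K) _)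
    have := ge_of_tendsto' hlim hbound
    simpa using this
  -- let M → ∞
  have htend : Tendsto (fun M : ℕ => ENNReal.ofReal (1/((M:ℝ)+1))) atTop (nhds 0) := by
    have h := ENNReal.tendsto_ofReal tendsto_one_div_add_atTop_nhds_zero_nat
    simpa using h
  refine le_antisymm (ge_of_tendsto' htend fun M => ?_) zero_le
  have h := key (M+1) (Nat.le_add_left 1 M)
  have : (((M+1 : ℕ)):ℝ) = (M:ℝ)+1 := by push_cast; ring
  rw [this] at h
  exact h

/-- For the symmetric `(p,q)` random walk (increments i.i.d. in `{-1,0,1}` with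
`P[X=±1]=p`, `P[X=0]=q=1-2p`), the sum over `j ≥ 1` of
`K(j) = P[S₁>0, …, S_{j-1}>0, S_j = 0]` equals `(1+q)/2`. -/
theorem stmt4 {Ω : Type*} [MeasureSpace Ω] (μ : Measure Ω) [IsProbabilityMeasure μ]
    (p q : ℝ) (hp : p ∈ Set.Ioo (0:ℝ) (1/2)) (hq : q = 1 - 2*p)
    (X : ℕ → Ω → ℤ)
    (hmeas : ∀ i, Measurable (X i))
    (hindep : iIndepFun X μ)
    (hdist1 : ∀ i, μ (X i ⁻¹' {1}) = ENNReal.ofReal p)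
    (hdistm1 : ∀ i, μ (X i ⁻¹' {-1}) = ENNReal.ofReal p)
    (hdist0 : ∀ i, μ (X i ⁻¹' {0}) = ENNReal.ofReal q)
    (S : ℕ → Ω → ℤ)
    (hS : ∀ n ω, S n ω = ∑ i ∈ Finset.range n, X i ω)
    (K : ℕ → ℝ≥0∞)
    (hK : ∀ j, K j =
      μ {ω | (∀ i, 0 < i → i < j → 0 < S i ω) ∧ S j ω = 0}) :
    ∑' j : ℕ, K (j + 1) = ENNReal.ofReal ((1 + q)/2) := by
  obtain ⟨hp0, hp2⟩ := hp
  have hq0 : 0 < q := by rw [hq]; linarith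
  -- basic measurability of S
  have hSeq : ∀ n, S n = fun ω => ∑ i ∈ Finset.range n, X i ω := fun n => funext (hS n)
  have hSmeas : ∀ n, Measurable (S n) := by
    intro n; rw [hSeq n]; exact Finset.measurable_sum _ fun i _ => hmeas i
  -- the good set where all increments are in {-1,0,1}
  set G : Set Ω := {ω | ∀ n, X n ω = 1 ∨ X n ω = -1 ∨ X n ω = 0} with hGdef
  have hGc : μ Gᶜ = 0 := by
    have hone : ∀ n, μ (X n ⁻¹' {1} ∪ X n ⁻¹' {-1} ∪ X n ⁻¹' {0}) = 1 := by
      intro n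
      have hd1 : Disjoint (X n ⁻¹' {1}) (X n ⁻¹' {-1}) := by
        refine Set.disjoint_left.2 fun ω h1 h2 => ?_
        simp only [Set.mem_preimage, Set.mem_singleton_iff] at h1 h2; omega
      have hd2 : Disjoint (X n ⁻¹' {1} ∪ X n ⁻¹' {-1}) (X n ⁻¹' {0}) := by
        refine Set.disjoint_left.2 fun ω h1 h2 => ?_
        simp only [Set.mem_union, Set.mem_preimage, Set.mem_singleton_iff] at h1 h2; omega
      rw [measure_union hd2 ((hmeas n) (measurableSet_singleton _)),
        measure_union hd1 ((hmeas n) (measurableSet_singleton _)),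
        hdist1, hdistm1, hdist0, ← ENNReal.ofReal_add hp0.le hp0.le,
        ← ENNReal.ofReal_add (by linarith) hq0.le]
      rw [show p + p + q = 1 by rw [hq]; ring, ENNReal.ofReal_one]
    have hsub : Gᶜ ⊆ ⋃ n, (X n ⁻¹' {1} ∪ X n ⁻¹' {-1} ∪ X n ⁻¹' {0})ᶜ := by
      intro ω hω
      simp only [hGdef, Set.mem_compl_iff, Set.mem_setOf_eq, not_forall] at hω
      obtain ⟨n, hn⟩ := hω
      refine Set.mem_iUnion.2 ⟨n, ?_⟩
      simp only [Set.mem_compl_iff, Set.mem_union, Set.mem_preimage, Set.mem_singleton_iff]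
      push_neg at hn ⊢
      exact ⟨⟨hn.1, hn.2.1⟩, hn.2.2⟩
    refine measure_mono_null hsub (measure_iUnion_null fun n => ?_)
    have hm : MeasurableSet (X n ⁻¹' {1} ∪ X n ⁻¹' {-1} ∪ X n ⁻¹' {0}) :=
      (((hmeas n) (measurableSet_singleton _)).union ((hmeas n) (measurableSet_singleton _))).union
        ((hmeas n) (measurableSet_singleton _))
    rw [prob_compl_eq_zero_iff hm]; exact hone n
  have hGae : ∀ᵐ ω ∂μ, ω ∈ G := by
    rw [ae_iff]; exact hGc
  -- the never-returning set is null (hard part)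
  have hN0 : μ {ω | ∀ n, 1 ≤ n → 1 ≤ S n ω} = 0 :=
    never_return_null μ p q hp0 hp2 hq X hmeas hindep hdist1 hdistm1 S hS G hGdef hGc
  -- assembly
  set A : ℕ → Set Ω := fun j => {ω | (∀ i, 0 < i → i < j → 0 < S i ω) ∧ S j ω = 0} with hAdef
  have hAmeas : ∀ j, MeasurableSet (A j) := by
    intro j
    have h1 : A j = (⋂ i, ⋂ (_ : 0 < i), ⋂ (_ : i < j), {ω | 0 < S i ω}) ∩ {ω | S j ω = 0} := by
      ext ω; simp [hAdef]
    rw [h1]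
    refine MeasurableSet.inter ?_ ?_
    · exact MeasurableSet.iInter fun i => MeasurableSet.iInter fun _ =>
        MeasurableSet.iInter fun _ => (hSmeas i) measurableSet_Ioi
    · exact (hSmeas j) (measurableSet_singleton 0)
  have hdisj : Pairwise (Function.onFun Disjoint fun j => A (j + 1)) := by
    have key : ∀ i j : ℕ, i < j → Disjoint (A (i+1)) (A (j+1)) := by
      intro i j hij
      refine Set.disjoint_left.2 fun ω hi hj => ?_
      have h1 : S (i+1) ω = 0 := hi.2
      have h2 : 0 < S (i+1) ω := hj.1 (i+1) (Nat.succ_pos i) (by omega)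
      omega
    intro i j hij
    rcases lt_or_gt_of_ne hij with h | h
    · exact key i j h
    · exact (key j i h).symm
  have htsum : ∑' j : ℕ, K (j + 1) = μ (⋃ j, A (j + 1)) := by
    rw [measure_iUnion hdisj fun j => hAmeas (j+1)]
    exact tsum_congr fun j => hK (j+1)
  have hS1 : ∀ ω, S 1 ω = X 0 ω := by
    intro ω; rw [hS]; simp
  set E : Set Ω := X 0 ⁻¹' {0} ∪ X 0 ⁻¹' {1} with hEdef
  -- upper inclusion
  have hsub1 : (⋃ j, A (j + 1)) ⊆ E ∪ Gᶜ := by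
    intro ω hω
    by_cases hωG : ω ∈ G
    · left
      obtain ⟨j, hj⟩ := Set.mem_iUnion.1 hω
      have hX0 := hωG 0
      rcases Nat.eq_zero_or_pos j with rfl | hjpos
      · have : S 1 ω = 0 := hj.2
        rw [hS1 ω] at this
        exact Or.inl (by simpa using this)
      · have h1 : 0 < S 1 ω := hj.1 1 one_pos (by omega)
        rw [hS1 ω] at h1
        rcases hX0 with h | h | h
        · exact Or.inr (by simpa using h)
        · omega
        · omega
    · exact Or.inr hωG
  -- lower inclusion
  have hsub2 : E ⊆ (⋃ j, A (j + 1)) ∪ ({ω | ∀ n, 1 ≤ n → 1 ≤ S n ω} ∪ Gᶜ) := by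
    intro ω hω
    by_cases hωG : ω ∈ G
    · by_cases hωN : ω ∈ {ω | ∀ n, 1 ≤ n → 1 ≤ S n ω}
      · exact Or.inr (Or.inl hωN)
      · left
        rcases hω with h0 | h1
        · -- X 0 ω = 0 : ω ∈ A 1
          refine Set.mem_iUnion.2 ⟨0, ?_, ?_⟩
          · intro i hi hij; omega
          · rw [hS1 ω]; simpa using h0
        · -- X 0 ω = 1
          have hX01 : X 0 ω = 1 := by simpa using h1
          simp only [Set.mem_setOf_eq, not_forall] at hωN
          obtain ⟨n, hn1, hn2⟩ := hωN
          have hex : ∃ n, 1 ≤ n ∧ S n ω ≤ 0 := ⟨n, hn1, by omega⟩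
          classical
          have hn₀1 : 1 ≤ Nat.find hex := (Nat.find_spec hex).1
          have hn₀le : S (Nat.find hex) ω ≤ 0 := (Nat.find_spec hex).2
          have hmin : ∀ k, 1 ≤ k → k < Nat.find hex → 1 ≤ S k ω := by
            intro k hk1 hk2
            have := Nat.find_min hex hk2
            push_neg at this
            have := this hk1; omega
          have hn₀ne1 : Nat.find hex ≠ 1 := by
            intro h
            rw [h] at hn₀le
            rw [hS1 ω, hX01] at hn₀le; omega
          obtain ⟨m, hm⟩ : ∃ m, Nat.find hex = m + 1 := ⟨Nat.find hex - 1, by omega⟩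
          rw [hm] at hn₀le hmin
          have hm1 : 1 ≤ m := by omega
          have hstep : S (m+1) ω = S m ω + X m ω := by
            rw [hS, hS, Finset.sum_range_succ]
          have hXm : -1 ≤ X m ω := by rcases hωG m with h | h | h <;> omega
          have hSm : 1 ≤ S m ω := hmin m hm1 (by omega)
          have hS0 : S (m+1) ω = 0 := by omega
          refine Set.mem_iUnion.2 ⟨m, ?_, hS0⟩
          intro i hi hij
          have := hmin i hi (by omega); omega
    · exact Or.inr (Or.inr hωG)
  have hUm : MeasurableSet (⋃ j, A (j+1)) := MeasurableSet.iUnion fun j => hAmeas (j+1)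
  have hEm : MeasurableSet E :=
    ((hmeas 0) (measurableSet_singleton _)).union ((hmeas 0) (measurableSet_singleton _))
  have hmuE : μ E = ENNReal.ofReal ((1 + q)/2) := by
    have hd : Disjoint (X 0 ⁻¹' {0}) (X 0 ⁻¹' {1}) := by
      refine Set.disjoint_left.2 fun ω h1 h2 => ?_
      simp only [Set.mem_preimage, Set.mem_singleton_iff] at h1 h2; omega
    rw [hEdef, measure_union hd ((hmeas 0) (measurableSet_singleton _)), hdist0, hdist1,
      ← ENNReal.ofReal_add hq0.le hp0.le]
    congr 1
    rw [hq]; ring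
  have h1 : μ (⋃ j, A (j+1)) ≤ μ E := by
    calc μ (⋃ j, A (j+1)) ≤ μ (E ∪ Gᶜ) := measure_mono hsub1
      _ ≤ μ E + μ Gᶜ := measure_union_le _ _
      _ = μ E := by rw [hGc, add_zero]
  have h2 : μ E ≤ μ (⋃ j, A (j+1)) := by
    calc μ E ≤ μ ((⋃ j, A (j+1)) ∪ ({ω | ∀ n, 1 ≤ n → 1 ≤ S n ω} ∪ Gᶜ)) := measure_mono hsub2
      _ ≤ μ (⋃ j, A (j+1)) + μ ({ω | ∀ n, 1 ≤ n → 1 ≤ S n ω} ∪ Gᶜ) := measure_union_le _ _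
      _ ≤ μ (⋃ j, A (j+1)) + (μ {ω | ∀ n, 1 ≤ n → 1 ≤ S n ω} + μ Gᶜ) :=
          add_le_add_right (measure_union_le _ _) _
      _ = μ (⋃ j, A (j+1)) := by rw [hN0, hGc, add_zero, add_zero]
  rw [htsum, le_antisymm h1 h2, hmuE]
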